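/- arXiv:1711.02591 — 5 statements merged into one kernel-verified Lean document; each statement's English description precedes it below -/
import Mathlib

section
/- Under Assumption (0 < τ < 2/‖A*A‖), the iterates x^{k+1} = J_τ ∘ G_τ(x^k) satisfy the Fejér-type inequality: for any minimizer x* of φ₁ + φ₂ and any k ≥ 0, ‖x^{k+1} − x*‖² ≤ ‖x^k − x*‖² − Σ_{j∈[N]} ‖P_τ(G_τ(x^k)_j) − P_τ(G_τ(x*)_j)‖₂², where P_τ is the metric projection of ℓ²(Ω) onto the ball B(0,τ). -/
open scoped InnerProductSpace

section aux
variable {H0 : Type*} [NormedAddCommGroup H0] [InnerProductSpace ℝ H0]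

noncomputable def sthr (τ : ℝ) (w : H0) : H0 := (max (‖w‖ - τ) 0 / ‖w‖) • w

lemma sthr_prox (τ : ℝ) (hτ : 0 < τ) (w z : H0) :
    τ * ‖sthr τ w‖ + ‖sthr τ w - w‖ ^ 2 / 2 + ‖z - sthr τ w‖ ^ 2 / 2 ≤
      τ * ‖z‖ + ‖z - w‖ ^ 2 / 2 := by
  have hzw : ⟪z, w⟫_ℝ ≤ ‖z‖ * ‖w‖ := real_inner_le_norm z w
  have hz0 : (0:ℝ) ≤ ‖z‖ := norm_nonneg z
  have hw0 : (0:ℝ) ≤ ‖w‖ := norm_nonneg w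
  have hexp : ‖z - w‖ ^ 2 = ‖z‖ ^ 2 - 2 * ⟪z, w⟫_ℝ + ‖w‖ ^ 2 := norm_sub_sq_real z w
  by_cases h : ‖w‖ ≤ τ
  · have hs : sthr τ w = 0 := by
      rw [sthr, max_eq_right (by linarith : ‖w‖ - τ ≤ 0)]
      simp
    rw [hs]
    simp only [norm_zero, mul_zero, zero_sub, norm_neg, sub_zero]
    nlinarith
  · push_neg at h
    have hw : (0:ℝ) < ‖w‖ := lt_trans hτ h
    set c : ℝ := (‖w‖ - τ) / ‖w‖ with hc
    have hc0 : 0 ≤ c := div_nonneg (by linarith) hw.le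
    have hcw : c * ‖w‖ = ‖w‖ - τ := div_mul_cancel₀ _ hw.ne'
    have hc1 : c ≤ 1 := by rw [hc, div_le_one hw]; linarith
    have hs : sthr τ w = c • w := by rw [sthr, max_eq_left (by linarith : (0:ℝ) ≤ ‖w‖ - τ)]
    rw [hs]
    have hns : ‖c • w‖ = ‖w‖ - τ := by
      rw [norm_smul, Real.norm_eq_abs, abs_of_nonneg hc0, hcw]
    have hsw : ‖c • w - w‖ = τ := by
      have : c • w - w = (c - 1) • w := by rw [sub_smul, one_smul]
      rw [this, norm_smul, Real.norm_eq_abs, abs_of_nonpos (by linarith)]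
      nlinarith
    have hzs : ‖z - c • w‖ ^ 2 = ‖z‖ ^ 2 - 2 * (c * ⟪z, w⟫_ℝ) + (c * ‖w‖) ^ 2 := by
      rw [norm_sub_sq_real, real_inner_smul_right, norm_smul, Real.norm_eq_abs,
        abs_of_nonneg hc0, mul_pow]
    rw [hns, hsw, hzs, hexp, hcw]
    nlinarith [mul_le_mul_of_nonneg_left hzw (by linarith : (0:ℝ) ≤ 1 - c),
      mul_nonneg (sub_nonneg.2 hc1) (sub_nonneg.2 hzw)]

lemma sthr_firm (τ : ℝ) (hτ : 0 < τ) (a b : H0) :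
    ‖sthr τ a - sthr τ b‖ ^ 2 + ‖(a - sthr τ a) - (b - sthr τ b)‖ ^ 2 ≤ ‖a - b‖ ^ 2 := by
  have h1 := sthr_prox τ hτ a (sthr τ b)
  have h2 := sthr_prox τ hτ b (sthr τ a)
  set sa := sthr τ a with hsa
  set sb := sthr τ b with hsb
  have e1 : ‖sb - a‖ ^ 2 = ‖sb - sa‖ ^ 2 + 2 * ⟪sb - sa, sa - a⟫_ℝ + ‖sa - a‖ ^ 2 := by
    rw [show sb - a = (sb - sa) + (sa - a) by abel, norm_add_sq_real]
  have e2 : ‖sa - b‖ ^ 2 = ‖sa - sb‖ ^ 2 + 2 * ⟪sa - sb, sb - b⟫_ℝ + ‖sb - b‖ ^ 2 := by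
    rw [show sa - b = (sa - sb) + (sb - b) by abel, norm_add_sq_real]
  have e3 : ⟪sb - sa, sa - a⟫_ℝ = - ⟪sa - sb, sa - a⟫_ℝ := by
    rw [show sb - sa = -(sa - sb) by abel, inner_neg_left]
  have e4 : ⟪sa - sb, sb - b⟫_ℝ - ⟪sa - sb, sa - a⟫_ℝ =
      ⟪sa - sb, a - b⟫_ℝ - ‖sa - sb‖ ^ 2 := by
    rw [← inner_sub_right, ← real_inner_self_eq_norm_sq, ← inner_sub_right]
    congr 1
    abel
  have nsym : ‖sb - sa‖ ^ 2 = ‖sa - sb‖ ^ 2 := by rw [norm_sub_rev]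
  have nsym2 : ‖sb - sa‖ ^ 2 = ‖sa - sb‖ ^ 2 := by rw [norm_sub_rev]
  have firm : ‖sa - sb‖ ^ 2 ≤ ⟪sa - sb, a - b⟫_ℝ := by
    rw [nsym2] at h1
    linarith [h1, h2, e1, e2, e3, e4, nsym]
  have e5 : ‖a - b‖ ^ 2 = ‖sa - sb‖ ^ 2 + 2 * ⟪sa - sb, (a - sa) - (b - sb)⟫_ℝ +
      ‖(a - sa) - (b - sb)‖ ^ 2 := by
    rw [show a - b = (sa - sb) + ((a - sa) - (b - sb)) by abel, norm_add_sq_real]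
  have e6 : ⟪sa - sb, (a - sa) - (b - sb)⟫_ℝ = ⟪sa - sb, a - b⟫_ℝ - ‖sa - sb‖ ^ 2 := by
    rw [← real_inner_self_eq_norm_sq, ← inner_sub_right]
    congr 1
    abel
  linarith [firm, e5, e6]

lemma pos_of_small (D C : ℝ) (hC : 0 ≤ C) (h : ∀ t : ℝ, 0 < t → t ≤ 1 → 0 ≤ D + t * C) :
    0 ≤ D := by
  by_contra hD
  push_neg at hD
  rcases eq_or_lt_of_le hC with hC0 | hC0
  · have := h 1 one_pos le_rfl
    nlinarith
  · have ht0 : 0 < min 1 (-D / (2 * C)) := by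
      exact lt_min one_pos (div_pos (by linarith) (by linarith))
    have := h _ ht0 (min_le_left _ _)
    have h2 : min 1 (-D / (2 * C)) * C ≤ (-D / (2 * C)) * C :=
      mul_le_mul_of_nonneg_right (min_le_right _ _) hC
    have h3 : (-D / (2 * C)) * C = -D / 2 := by field_simp
    nlinarith

end aux


variable {H0 K : Type*} [NormedAddCommGroup H0] [InnerProductSpace ℝ H0] [CompleteSpace H0]
  [NormedAddCommGroup K] [InnerProductSpace ℝ K] [CompleteSpace K]

instance {N : ℕ} : CompleteSpace (PiLp 2 (fun _ : Fin N => H0)) :=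
  inferInstance

set_option maxHeartbeats 1000000 in
/-- Fejér-type inequality for forward–backward iterates: for any minimizer `x*`,
`‖x^{k+1} - x*‖² ≤ ‖x^k - x*‖² - Σ_j ‖P_τ(G_τ(x^k)_j) - P_τ(G_τ(x*)_j)‖²`. -/
theorem stmt_9 {N : ℕ} (A : PiLp 2 (fun _ : Fin N => H0) →L[ℝ] K) (u : K)
    (τ : ℝ) (hτ0 : 0 < τ) (hτ2 : τ * ‖(ContinuousLinearMap.adjoint A).comp A‖ < 2)
    (xs : PiLp 2 (fun _ : Fin N => H0))
    (hmin : ∀ y : PiLp 2 (fun _ : Fin N => H0),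
      (∑ j, ‖xs j‖) + ‖A xs - u‖ ^ 2 / 2 ≤ (∑ j, ‖y j‖) + ‖A y - u‖ ^ 2 / 2)
    (G : PiLp 2 (fun _ : Fin N => H0) → PiLp 2 (fun _ : Fin N => H0))
    (hG : ∀ y, G y = y - τ • (ContinuousLinearMap.adjoint A) (A y - u))
    (P : H0 → H0)
    (hP : ∀ z : H0, P z = if ‖z‖ ≤ τ then z else (τ / ‖z‖) • z)
    (x : ℕ → PiLp 2 (fun _ : Fin N => H0))
    (hiter : ∀ (k : ℕ) (j : Fin N),
      x (k + 1) j = (max (‖G (x k) j‖ - τ) 0 / ‖G (x k) j‖) • G (x k) j) :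
    ∀ k : ℕ, ‖x (k + 1) - xs‖ ^ 2 ≤
      ‖x k - xs‖ ^ 2 - ∑ j, ‖P (G (x k) j) - P (G xs j)‖ ^ 2 := by
  classical
  set B := (ContinuousLinearMap.adjoint A).comp A with hB
  -- norms squared on PiLp are sums of coordinate norms squared
  have hnsq : ∀ p q : PiLp 2 (fun _ : Fin N => H0), ‖p - q‖ ^ 2 = ∑ j, ‖p j - q j‖ ^ 2 := by
    intro p q
    rw [PiLp.norm_sq_eq_of_L2]
    exact Finset.sum_congr rfl fun j _ => by rw [PiLp.sub_apply]
  -- nonexpansiveness of I - τ B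
  have hnon : ∀ v : PiLp 2 (fun _ : Fin N => H0), ‖v - τ • B v‖ ^ 2 ≤ ‖v‖ ^ 2 := by
    intro v
    have hBv : B v = ContinuousLinearMap.adjoint A (A v) := rfl
    have hinner : ⟪v, B v⟫_ℝ = ‖A v‖ ^ 2 := by
      rw [real_inner_comm, hBv, ContinuousLinearMap.adjoint_inner_left,
        real_inner_self_eq_norm_sq]
    have hBnorm : ‖B‖ = ‖A‖ * ‖A‖ := ContinuousLinearMap.norm_adjoint_comp_self A
    have hBv2 : ‖B v‖ ≤ ‖A‖ * ‖A v‖ := by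
      rw [hBv]
      calc ‖ContinuousLinearMap.adjoint A (A v)‖
          ≤ ‖ContinuousLinearMap.adjoint A‖ * ‖A v‖ := ContinuousLinearMap.le_opNorm _ _
        _ = ‖A‖ * ‖A v‖ := by rw [LinearIsometryEquiv.norm_map ContinuousLinearMap.adjoint A]
    have hsq : ‖v - τ • B v‖ ^ 2 = ‖v‖ ^ 2 - 2 * (τ * ⟪v, B v⟫_ℝ) + (τ * ‖B v‖) ^ 2 := by
      rw [norm_sub_sq_real, real_inner_smul_right, norm_smul, Real.norm_eq_abs,
        abs_of_pos hτ0]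
    have hτB : τ * (‖A‖ * ‖A‖) < 2 := by rw [← hBnorm]; exact hτ2
    have hBv3 : ‖B v‖ ^ 2 ≤ (‖A‖ * ‖A v‖) ^ 2 := by
      have := norm_nonneg (B v)
      nlinarith [hBv2]
    rw [hsq, hinner]
    nlinarith [hBv3, hτB, hτ0, sq_nonneg (‖A v‖), mul_nonneg hτ0.le (sq_nonneg ‖A v‖),
      mul_nonneg (mul_nonneg hτ0.le hτ0.le) (sq_nonneg ‖A v‖)]
  -- variational inequality at the minimizer
  have hVI : ∀ z : PiLp 2 (fun _ : Fin N => H0),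
      0 ≤ ((∑ j, ‖z j‖) - ∑ j, ‖xs j‖) +
        ⟪(ContinuousLinearMap.adjoint A) (A xs - u), z - xs⟫_ℝ := by
    intro z
    refine pos_of_small _ (‖A (z - xs)‖ ^ 2 / 2) (by positivity) ?_
    intro t ht0 ht1
    have hm := hmin (xs + t • (z - xs))
    have hconv : ∑ j, ‖(xs + t • (z - xs)) j‖ ≤
        (1 - t) * (∑ j, ‖xs j‖) + t * (∑ j, ‖z j‖) := by
      rw [Finset.mul_sum, Finset.mul_sum, ← Finset.sum_add_distrib]
      refine Finset.sum_le_sum fun j _ => ?_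
      have hj : (xs + t • (z - xs)) j = (1 - t) • xs j + t • z j := by
        rw [PiLp.add_apply, PiLp.smul_apply, PiLp.sub_apply, smul_sub, sub_smul, one_smul]
        abel
      rw [hj]
      calc ‖(1 - t) • xs j + t • z j‖ ≤ ‖(1 - t) • xs j‖ + ‖t • z j‖ := norm_add_le _ _
        _ = (1 - t) * ‖xs j‖ + t * ‖z j‖ := by
            rw [norm_smul, norm_smul, Real.norm_eq_abs, Real.norm_eq_abs,
              abs_of_nonneg (by linarith), abs_of_pos ht0]
    have hAy : A (xs + t • (z - xs)) - u = (A xs - u) + t • A (z - xs) := by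
      rw [map_add, map_smul]
      abel
    have hquad : ‖A (xs + t • (z - xs)) - u‖ ^ 2 =
        ‖A xs - u‖ ^ 2 + 2 * (t * ⟪A xs - u, A (z - xs)⟫_ℝ) + (t * ‖A (z - xs)‖) ^ 2 := by
      rw [hAy, norm_add_sq_real, real_inner_smul_right, norm_smul, Real.norm_eq_abs,
        abs_of_pos ht0]
    have hadj : ⟪(ContinuousLinearMap.adjoint A) (A xs - u), z - xs⟫_ℝ =
        ⟪A xs - u, A (z - xs)⟫_ℝ := ContinuousLinearMap.adjoint_inner_left A (z - xs) (A xs - u)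
    rw [hadj]
    have hmul : t * 0 ≤ t * ((((∑ j, ‖z j‖) - ∑ j, ‖xs j‖) + ⟪A xs - u, A (z - xs)⟫_ℝ) +
        t * (‖A (z - xs)‖ ^ 2 / 2)) := by nlinarith [hm, hconv, hquad]
    exact le_of_mul_le_mul_left hmul ht0
  -- the fixed point property
  set w := G xs with hw
  have hxsw : xs - w = τ • (ContinuousLinearMap.adjoint A) (A xs - u) := by
    rw [hw, hG]
    abel
  have hsVI : ∀ z : PiLp 2 (fun _ : Fin N => H0),
      τ * (∑ j, ‖xs j‖) + ‖xs - w‖ ^ 2 / 2 + ‖z - xs‖ ^ 2 / 2 ≤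
        τ * (∑ j, ‖z j‖) + ‖z - w‖ ^ 2 / 2 := by
    intro z
    have h := hVI z
    have e : ‖z - w‖ ^ 2 = ‖z - xs‖ ^ 2 + 2 * ⟪z - xs, xs - w⟫_ℝ + ‖xs - w‖ ^ 2 := by
      rw [show z - w = (z - xs) + (xs - w) by abel, norm_add_sq_real]
    have e2 : ⟪z - xs, xs - w⟫_ℝ =
        τ * ⟪(ContinuousLinearMap.adjoint A) (A xs - u), z - xs⟫_ℝ := by
      rw [hxsw, real_inner_smul_right, real_inner_comm]
    linarith [mul_le_mul_of_nonneg_left h hτ0.le, e, e2]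
  have hfix : ∀ j, xs j = sthr τ (w j) := by
    have hsum := hsVI (WithLp.toLp 2 (fun j => sthr τ (w j)))
    have hprox : ∀ j ∈ Finset.univ, τ * ‖sthr τ (w j)‖ + ‖sthr τ (w j) - w j‖ ^ 2 / 2 +
        ‖xs j - sthr τ (w j)‖ ^ 2 / 2 ≤ τ * ‖xs j‖ + ‖xs j - w j‖ ^ 2 / 2 :=
      fun j _ => sthr_prox τ hτ0 (w j) (xs j)
    have hproxsum := Finset.sum_le_sum hprox
    simp only [Finset.sum_add_distrib, ← Finset.mul_sum, ← Finset.sum_div] at hproxsum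
    have hzero : ∑ j, ‖xs j - sthr τ (w j)‖ ^ 2 ≤ 0 := by
      have n1 := hnsq xs w
      have n2 := hnsq (WithLp.toLp 2 (fun j => sthr τ (w j)) : PiLp 2 (fun _ : Fin N => H0)) xs
      have n3 := hnsq (WithLp.toLp 2 (fun j => sthr τ (w j)) : PiLp 2 (fun _ : Fin N => H0)) w
      have n4 : ∑ j, ‖(WithLp.toLp 2 (fun j => sthr τ (w j)) : PiLp 2 (fun _ : Fin N => H0)) j - xs j‖ ^ 2 =
          ∑ j, ‖xs j - sthr τ (w j)‖ ^ 2 :=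
        Finset.sum_congr rfl fun j _ => by rw [norm_sub_rev]
      simp only [WithLp.ofLp_toLp] at hsum n2 n3 n4
      linarith [hsum, hproxsum, n1, n2, n3, n4]
    intro j
    have hj : ‖xs j - sthr τ (w j)‖ ^ 2 = 0 := by
      have hnn : ∀ i ∈ Finset.univ, (0:ℝ) ≤ ‖xs i - sthr τ (w i)‖ ^ 2 :=
        fun i _ => sq_nonneg _
      have := (Finset.sum_eq_zero_iff_of_nonneg hnn).1
        (le_antisymm hzero (Finset.sum_nonneg hnn)) j (Finset.mem_univ j)
      exact this
    have := pow_eq_zero_iff (n := 2) (by norm_num) |>.1 hj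
    rw [← sub_eq_zero]
    exact norm_eq_zero.1 this
  -- P z = z - sthr τ z
  have hPz : ∀ z : H0, P z = z - sthr τ z := by
    intro z
    rw [hP]
    by_cases h : ‖z‖ ≤ τ
    · rw [if_pos h, sthr, max_eq_right (by linarith : ‖z‖ - τ ≤ 0)]
      simp
    · push_neg at h
      have hz : (0:ℝ) < ‖z‖ := lt_trans hτ0 h
      rw [if_neg (not_le.2 h), sthr, max_eq_left (by linarith : (0:ℝ) ≤ ‖z‖ - τ)]
      rw [show z - ((‖z‖ - τ) / ‖z‖) • z = (1 - (‖z‖ - τ) / ‖z‖) • z by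
        rw [sub_smul, one_smul]]
      congr 1
      field_simp
      ring
  -- main estimate
  intro k
  set a := G (x k) with ha
  have hab : a - w = (x k - xs) - τ • B (x k - xs) := by
    have hd : (ContinuousLinearMap.adjoint A) (A (x k) - u) -
        (ContinuousLinearMap.adjoint A) (A xs - u) = B (x k - xs) := by
      rw [← map_sub, show A (x k) - u - (A xs - u) = A (x k) - A xs by abel, ← map_sub]
      rfl
    rw [ha, hw, hG, hG, ← hd, smul_sub]
    abel
  have hfirm : ∀ j ∈ Finset.univ, ‖sthr τ (a j) - sthr τ (w j)‖ ^ 2 +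
      ‖(a j - sthr τ (a j)) - (w j - sthr τ (w j))‖ ^ 2 ≤ ‖a j - w j‖ ^ 2 :=
    fun j _ => sthr_firm τ hτ0 (a j) (w j)
  have hfs := Finset.sum_le_sum hfirm
  rw [Finset.sum_add_distrib] at hfs
  have hx1 : ∀ j : Fin N, x (k + 1) j - xs j = sthr τ (a j) - sthr τ (w j) := by
    intro j
    rw [hiter k j, hfix j]
    rfl
  have hL : ‖x (k + 1) - xs‖ ^ 2 = ∑ j, ‖sthr τ (a j) - sthr τ (w j)‖ ^ 2 := by
    rw [hnsq]
    exact Finset.sum_congr rfl fun j _ => by rw [hx1 j]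
  have hPsum : ∑ j, ‖P (a j) - P (w j)‖ ^ 2 =
      ∑ j, ‖(a j - sthr τ (a j)) - (w j - sthr τ (w j))‖ ^ 2 :=
    Finset.sum_congr rfl fun j _ => by rw [hPz, hPz]
  have hR : ∑ j, ‖a j - w j‖ ^ 2 ≤ ‖x k - xs‖ ^ 2 := by
    rw [← hnsq a w]
    rw [hab]
    exact hnon (x k - xs)
  rw [hL, hPsum]
  linarith [hfs, hR]
end

section
/- Under Assumption (0 < τ < 2/‖A*A‖), for iterates x^{k+1} = J_τ ∘ G_τ(x^k) and any minimizer x*, the quantities c̄^k := Σ_{j∈[N]} ‖P_τ(G_τ(x^k)_j) − P_τ(G_τ(x*)_j)‖₂² satisfy Σ_{k=0}^∞ c̄^k ≤ ‖x^0 − x*‖², and hence P_τ(G_τ(x^k)_j) → P_τ(G_τ(x*)_j) strongly in ℓ²(Ω) for every j ∈ [N]. -/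
open Filter

variable {H0 K : Type*} [NormedAddCommGroup H0] [InnerProductSpace ℝ H0] [CompleteSpace H0]
  [NormedAddCommGroup K] [InnerProductSpace ℝ K] [CompleteSpace K]

open RealInnerProductSpace
section Helpers
open RealInnerProductSpace

variable {F : Type*} [NormedAddCommGroup F] [InnerProductSpace ℝ F]

noncomputable def shr (τ : ℝ) (z : F) : F := (max (‖z‖ - τ) 0 / ‖z‖) • z

noncomputable def pj (τ : ℝ) (z : F) : F := if ‖z‖ ≤ τ then z else (τ / ‖z‖) • z

lemma shr_eq (τ : ℝ) (hτ : 0 ≤ τ) (z : F) : shr τ z = z - pj τ z := by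
  unfold shr pj
  by_cases h : ‖z‖ ≤ τ
  · simp [h, max_eq_right (sub_nonpos.mpr h)]
  · push_neg at h
    have hz : ‖z‖ ≠ 0 := (lt_of_le_of_lt hτ h).ne'
    rw [if_neg (not_le.mpr h), max_eq_left (le_of_lt (sub_pos.mpr h))]
    rw [sub_div, div_self hz, sub_smul, one_smul]

lemma pj_norm_le (τ : ℝ) (hτ : 0 ≤ τ) (z : F) : ‖pj τ z‖ ≤ τ := by
  unfold pj
  by_cases h : ‖z‖ ≤ τ
  · simpa [h]
  · push_neg at h
    have hz : (0:ℝ) < ‖z‖ := lt_of_le_of_lt hτ h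
    rw [if_neg (not_le.mpr h), norm_smul, Real.norm_eq_abs,
      abs_of_nonneg (div_nonneg hτ hz.le), div_mul_cancel₀ _ hz.ne']

lemma pj_var (τ : ℝ) (hτ : 0 ≤ τ) (z v : F) (hv : ‖v‖ ≤ τ) :
    ⟪z - pj τ z, v - pj τ z⟫ ≤ 0 := by
  unfold pj
  by_cases h : ‖z‖ ≤ τ
  · simp [h]
  · push_neg at h
    have hz : (0:ℝ) < ‖z‖ := lt_of_le_of_lt hτ h
    rw [if_neg (not_le.mpr h)]
    have hc : (τ / ‖z‖) * ‖z‖ = τ := div_mul_cancel₀ _ hz.ne'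
    have hc0 : 0 ≤ τ / ‖z‖ := div_nonneg hτ hz.le
    have hc1 : τ / ‖z‖ ≤ 1 := (div_le_one hz).mpr h.le
    have hivz : ⟪z, v⟫ ≤ ‖z‖ * ‖v‖ := real_inner_le_norm z v
    have e1 : z - (τ / ‖z‖) • z = (1 - τ / ‖z‖) • z := by
      rw [sub_smul, one_smul]
    rw [e1, inner_smul_left, inner_sub_right, inner_smul_right,
      real_inner_self_eq_norm_sq]
    simp only [RCLike.star_def, starRingEnd_apply, star_trivial]
    nlinarith [norm_nonneg v, norm_nonneg z]

lemma firm (τ : ℝ) (hτ : 0 ≤ τ) (z w : F) :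
    ‖shr τ z - shr τ w‖ ^ 2 + ‖pj τ z - pj τ w‖ ^ 2 ≤ ‖z - w‖ ^ 2 := by
  have h1 := pj_var τ hτ z (pj τ w) (pj_norm_le τ hτ w)
  have h2 := pj_var τ hτ w (pj τ z) (pj_norm_le τ hτ z)
  have hdec : z - w = (shr τ z - shr τ w) + (pj τ z - pj τ w) := by
    rw [shr_eq τ hτ, shr_eq τ hτ]; abel
  have e := norm_add_sq_real (shr τ z - shr τ w) (pj τ z - pj τ w)
  rw [hdec, e]
  have ecross : ⟪shr τ z - shr τ w, pj τ z - pj τ w⟫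
      = -⟪z - pj τ z, pj τ w - pj τ z⟫ - ⟪w - pj τ w, pj τ z - pj τ w⟫ := by
    rw [shr_eq τ hτ, shr_eq τ hτ]
    have : (z - pj τ z) - (w - pj τ w) = (z - pj τ z) + -(w - pj τ w) := by abel
    rw [this, inner_add_left, inner_neg_left]
    have : pj τ z - pj τ w = -(pj τ w - pj τ z) := by abel
    nth_rewrite 1 [this]
    rw [inner_neg_right]
    ring
  nlinarith [h1, h2, ecross]

lemma prox_min (τ : ℝ) (hτ : 0 ≤ τ) (z v : F) :
    τ * ‖shr τ z‖ + ‖shr τ z - z‖ ^ 2 / 2 ≤ τ * ‖v‖ + ‖v - z‖ ^ 2 / 2 := by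
  have hvz : ⟪v, z⟫ ≤ ‖v‖ * ‖z‖ := real_inner_le_norm v z
  have hexp : ‖v - z‖ ^ 2 = ‖v‖ ^ 2 - 2 * ⟪v, z⟫ + ‖z‖ ^ 2 := norm_sub_sq_real v z
  unfold shr
  by_cases h : ‖z‖ ≤ τ
  · rw [max_eq_right (sub_nonpos.mpr h)]
    simp only [zero_div, zero_smul, norm_zero, zero_sub, norm_neg, mul_zero, zero_add]
    nlinarith [norm_nonneg v, norm_nonneg z]
  · push_neg at h
    have hz : (0:ℝ) < ‖z‖ := lt_of_le_of_lt hτ h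
    rw [max_eq_left (le_of_lt (sub_pos.mpr h))]
    have hc0 : 0 ≤ (‖z‖ - τ) / ‖z‖ := div_nonneg (by linarith) hz.le
    have e1 : ‖((‖z‖ - τ) / ‖z‖) • z‖ = ‖z‖ - τ := by
      rw [norm_smul, Real.norm_eq_abs, abs_of_nonneg hc0, div_mul_cancel₀ _ hz.ne']
    have e2 : (((‖z‖ - τ) / ‖z‖) • z) - z = (-(τ / ‖z‖)) • z := by
      rw [sub_div, div_self hz.ne', sub_smul, one_smul, neg_smul]
      abel
    have e3 : ‖(((‖z‖ - τ) / ‖z‖) • z) - z‖ = τ := by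
      rw [e2, norm_smul, Real.norm_eq_abs, abs_neg, abs_of_nonneg (div_nonneg hτ hz.le),
        div_mul_cancel₀ _ hz.ne']
    rw [e1, e3]
    nlinarith [sq_nonneg (‖v‖ - ‖z‖ + τ)]

lemma prox_unique (τ : ℝ) (hτ : 0 ≤ τ) (z v₀ : F)
    (h : ∀ v, τ * ‖v₀‖ + ‖v₀ - z‖ ^ 2 / 2 ≤ τ * ‖v‖ + ‖v - z‖ ^ 2 / 2) :
    v₀ = shr τ z := by
  set s := shr τ z with hs
  set m : F := (2:ℝ)⁻¹ • (v₀ + s) with hm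
  have hnm : ‖m‖ ≤ (‖v₀‖ + ‖s‖) / 2 := by
    rw [hm, norm_smul]
    have := norm_add_le v₀ s
    simp [Real.norm_eq_abs, abs_of_nonneg]
    linarith
  have hmz : m - z = (2:ℝ)⁻¹ • ((v₀ - z) + (s - z)) := by
    rw [hm, smul_add, smul_add]
    have : v₀ + s - 2 • z = (v₀ - z) + (s - z) := by abel
    module
  have hmz2 : ‖m - z‖ ^ 2
      = (‖v₀ - z‖ ^ 2 + 2 * ⟪v₀ - z, s - z⟫ + ‖s - z‖ ^ 2) / 4 := by
    rw [hmz, norm_smul, mul_pow, norm_add_sq_real]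
    simp [Real.norm_eq_abs]
    ring
  have hd2 : ‖v₀ - s‖ ^ 2 = ‖v₀ - z‖ ^ 2 - 2 * ⟪v₀ - z, s - z⟫ + ‖s - z‖ ^ 2 := by
    have : v₀ - s = (v₀ - z) - (s - z) := by abel
    rw [this, norm_sub_sq_real]
  have h1 := h m
  have h2 := prox_min τ hτ z v₀
  rw [← hs] at h2
  have hmτ : τ * ‖m‖ ≤ τ * ((‖v₀‖ + ‖s‖) / 2) := mul_le_mul_of_nonneg_left hnm hτ
  have h3 : ‖v₀ - s‖ ^ 2 ≤ 0 := by nlinarith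
  have h4 : ‖v₀ - s‖ = 0 := le_antisymm (by nlinarith [norm_nonneg (v₀ - s)]) (norm_nonneg _)
  exact sub_eq_zero.mp (norm_eq_zero.mp h4)

end Helpers

set_option maxHeartbeats 1000000 in
/-- Summability of `c̄^k = Σ_j ‖P_τ(G_τ(x^k)_j) - P_τ(G_τ(x*)_j)‖²` with
`Σ_k c̄^k ≤ ‖x⁰ - x*‖²`, hence strong row-wise convergence of the projected
gradient steps. -/
theorem stmt_10 {N : ℕ} (A : PiLp 2 (fun _ : Fin N => H0) →L[ℝ] K) (u : K)
    (τ : ℝ) (hτ0 : 0 < τ) (hτ2 : τ * ‖(ContinuousLinearMap.adjoint A).comp A‖ < 2)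
    (xs : PiLp 2 (fun _ : Fin N => H0))
    (hmin : ∀ y : PiLp 2 (fun _ : Fin N => H0),
      (∑ j, ‖xs j‖) + ‖A xs - u‖ ^ 2 / 2 ≤ (∑ j, ‖y j‖) + ‖A y - u‖ ^ 2 / 2)
    (G : PiLp 2 (fun _ : Fin N => H0) → PiLp 2 (fun _ : Fin N => H0))
    (hG : ∀ y, G y = y - τ • (ContinuousLinearMap.adjoint A) (A y - u))
    (P : H0 → H0)
    (hP : ∀ z : H0, P z = if ‖z‖ ≤ τ then z else (τ / ‖z‖) • z)
    (x : ℕ → PiLp 2 (fun _ : Fin N => H0))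
    (hiter : ∀ (k : ℕ) (j : Fin N),
      x (k + 1) j = (max (‖G (x k) j‖ - τ) 0 / ‖G (x k) j‖) • G (x k) j) :
    Summable (fun k : ℕ => ∑ j, ‖P (G (x k) j) - P (G xs j)‖ ^ 2) ∧
      (∑' k : ℕ, ∑ j, ‖P (G (x k) j) - P (G xs j)‖ ^ 2) ≤ ‖x 0 - xs‖ ^ 2 ∧
      ∀ j : Fin N, Tendsto (fun k : ℕ => P (G (x k) j)) atTop (nhds (P (G xs j))) := by
  have hPpj : ∀ z : H0, P z = pj τ z := fun z => (hP z).trans rfl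
  set D := (ContinuousLinearMap.adjoint A) (A xs - u) with hD
  -- First-order optimality condition
  have hfo : ∀ y : PiLp 2 (fun _ : Fin N => H0),
      (∑ j, ‖xs j‖) ≤ (∑ j, ‖y j‖) + ⟪D, y - xs⟫ := by
    intro y
    have key : ∀ t : ℝ, 0 < t → t ≤ 1 →
        (∑ j, ‖xs j‖) ≤ (∑ j, ‖y j‖) + ⟪D, y - xs⟫ + t / 2 * ‖A (y - xs)‖ ^ 2 := by
      intro t ht0 ht1
      have hm := hmin (xs + t • (y - xs))
      have hg : (∑ j, ‖(xs + t • (y - xs)) j‖)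
          ≤ (1 - t) * (∑ j, ‖xs j‖) + t * (∑ j, ‖y j‖) := by
        rw [Finset.mul_sum, Finset.mul_sum, ← Finset.sum_add_distrib]
        apply Finset.sum_le_sum
        intro j _
        have hcj : (xs + t • (y - xs)) j = (1 - t) • xs j + t • y j := by
          simp only [PiLp.add_apply, PiLp.smul_apply, PiLp.sub_apply, smul_sub,
            sub_smul, one_smul]
          abel
        rw [hcj]
        calc ‖(1 - t) • xs j + t • y j‖ ≤ ‖(1 - t) • xs j‖ + ‖t • y j‖ := norm_add_le _ _
          _ = (1 - t) * ‖xs j‖ + t * ‖y j‖ := by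
              rw [norm_smul, norm_smul, Real.norm_eq_abs, Real.norm_eq_abs,
                abs_of_nonneg (by linarith : (0:ℝ) ≤ 1 - t), abs_of_pos ht0]
      have hq : ‖A (xs + t • (y - xs)) - u‖ ^ 2
          = ‖A xs - u‖ ^ 2 + 2 * t * ⟪D, y - xs⟫ + t ^ 2 * ‖A (y - xs)‖ ^ 2 := by
        have e : A (xs + t • (y - xs)) - u = (A xs - u) + t • A (y - xs) := by
          rw [map_add, map_smul]; abel
        rw [e, norm_add_sq_real, inner_smul_right, norm_smul, Real.norm_eq_abs,
          abs_of_pos ht0, hD, ContinuousLinearMap.adjoint_inner_left]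
        ring
      rw [hq] at hm
      have h5 : t * (∑ j, ‖xs j‖)
          ≤ t * ((∑ j, ‖y j‖) + ⟪D, y - xs⟫ + t / 2 * ‖A (y - xs)‖ ^ 2) := by
        nlinarith [hm, hg]
      exact le_of_mul_le_mul_left h5 ht0
    refine le_of_forall_pos_le_add ?_
    intro ε hε
    set S := ‖A (y - xs)‖ ^ 2 with hS
    have hS0 : 0 ≤ S := sq_nonneg _
    set t := min 1 (ε / (S + 1)) with ht
    have ht0 : 0 < t := lt_min one_pos (div_pos hε (by linarith))
    have ht1 : t ≤ 1 := min_le_left _ _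
    have h := key t ht0 ht1
    have h6 : t ≤ ε / (S + 1) := min_le_right _ _
    have h7 : t * (S + 1) ≤ ε := by
      rw [← div_mul_cancel₀ ε (show S + 1 ≠ 0 by linarith)]
      exact mul_le_mul_of_nonneg_right h6 (by linarith)
    nlinarith [h, h7, ht0]
  -- Fixed point property
  have hfix : ∀ j : Fin N, xs j = shr τ (G xs j) := by
    intro j
    apply prox_unique τ hτ0.le
    intro v
    have hGj : G xs j = xs j - τ • D j := by
      rw [hG]
      simp only [PiLp.sub_apply, PiLp.smul_apply, hD]
    have hyvdef : ∃ yv : PiLp 2 (fun _ : Fin N => H0),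
        yv = WithLp.toLp 2 (Function.update xs.ofLp j v) :=
      ⟨_, rfl⟩
    obtain ⟨yv, hyv⟩ := hyvdef
    have hyvj : yv j = v := by rw [hyv]; exact Function.update_self j v xs.ofLp
    have hyvi : ∀ i, i ≠ j → yv i = xs i := by
      intro i hij; rw [hyv]; exact Function.update_of_ne hij v xs.ofLp
    have hfoy := hfo yv
    have hsum : (∑ i, ‖yv i‖)
        = ‖v‖ + ∑ i ∈ Finset.univ.erase j, ‖xs i‖ := by
      rw [← Finset.add_sum_erase _ _ (Finset.mem_univ j), hyvj]
      congr 1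
      apply Finset.sum_congr rfl
      intro i hi
      rw [hyvi i (Finset.ne_of_mem_erase hi)]
    have hsumxs : (∑ i, ‖xs i‖) = ‖xs j‖ + ∑ i ∈ Finset.univ.erase j, ‖xs i‖ := by
      rw [← Finset.add_sum_erase _ _ (Finset.mem_univ j)]
    have hinner : ⟪D, yv - xs⟫ = ⟪D j, v - xs j⟫ := by
      rw [PiLp.inner_apply]
      rw [Finset.sum_eq_single j]
      · rw [PiLp.sub_apply, hyvj]
      · intro i _ hij
        rw [PiLp.sub_apply, hyvi i hij, sub_self, inner_zero_right]
      · intro h; exact absurd (Finset.mem_univ j) h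
    rw [hsum, hinner, hsumxs] at hfoy
    have hkey : ‖xs j‖ ≤ ‖v‖ + ⟪D j, v - xs j⟫ := by linarith
    have e1 : xs j - G xs j = τ • D j := by rw [hGj]; abel
    have e2 : v - G xs j = (v - xs j) + τ • D j := by rw [hGj]; abel
    have e3 : ‖v - G xs j‖ ^ 2
        = ‖v - xs j‖ ^ 2 + 2 * (τ * ⟪v - xs j, D j⟫) + τ ^ 2 * ‖D j‖ ^ 2 := by
      rw [e2, norm_add_sq_real, inner_smul_right, norm_smul, Real.norm_eq_abs,
        abs_of_pos hτ0]
      ring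
    have e4 : ‖xs j - G xs j‖ ^ 2 = τ ^ 2 * ‖D j‖ ^ 2 := by
      rw [e1, norm_smul, Real.norm_eq_abs, abs_of_pos hτ0, mul_pow]
    have hcomm : ⟪v - xs j, D j⟫ = ⟪D j, v - xs j⟫ := real_inner_comm _ _
    have hτkey := mul_le_mul_of_nonneg_left hkey hτ0.le
    rw [e3, e4, hcomm]
    nlinarith [sq_nonneg ‖v - xs j‖]
  -- Nonexpansiveness of G
  have hGne : ∀ y y' : PiLp 2 (fun _ : Fin N => H0), ‖G y - G y'‖ ≤ ‖y - y'‖ := by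
    intro y y'
    set d := y - y' with hd
    have e : G y - G y' = d - τ • (ContinuousLinearMap.adjoint A) (A d) := by
      have h1 : (ContinuousLinearMap.adjoint A) (A y - u)
          = (ContinuousLinearMap.adjoint A) (A y) - (ContinuousLinearMap.adjoint A) u :=
        map_sub _ _ _
      have h2 : (ContinuousLinearMap.adjoint A) (A y' - u)
          = (ContinuousLinearMap.adjoint A) (A y') - (ContinuousLinearMap.adjoint A) u :=
        map_sub _ _ _
      have h3 : (ContinuousLinearMap.adjoint A) (A d)
          = (ContinuousLinearMap.adjoint A) (A y) - (ContinuousLinearMap.adjoint A) (A y') := by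
        rw [hd, map_sub, map_sub]
      rw [hG y, hG y', h1, h2, h3, hd]
      module
    have hsq : ‖G y - G y'‖ ^ 2 ≤ ‖d‖ ^ 2 := by
      rw [e, norm_sub_sq_real, inner_smul_right, norm_smul, Real.norm_eq_abs,
        abs_of_pos hτ0]
      have h1 : ⟪d, (ContinuousLinearMap.adjoint A) (A d)⟫ = ‖A d‖ ^ 2 := by
        rw [ContinuousLinearMap.adjoint_inner_right, real_inner_self_eq_norm_sq]
      have h2 : ‖(ContinuousLinearMap.adjoint A) (A d)‖ ≤ ‖A‖ * ‖A d‖ := by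
        calc ‖(ContinuousLinearMap.adjoint A) (A d)‖
            ≤ ‖ContinuousLinearMap.adjoint A‖ * ‖A d‖ :=
              (ContinuousLinearMap.adjoint A).le_opNorm (A d)
          _ = ‖A‖ * ‖A d‖ := by rw [ContinuousLinearMap.adjoint.norm_map A]
      have h3 : ‖(ContinuousLinearMap.adjoint A).comp A‖ = ‖A‖ * ‖A‖ :=
        ContinuousLinearMap.norm_adjoint_comp_self A
      rw [h1]
      have h4 : τ * (‖A‖ * ‖A‖) < 2 := by rw [← h3]; exact hτ2
      have h5 : ‖(ContinuousLinearMap.adjoint A) (A d)‖ ^ 2 ≤ (‖A‖ * ‖A d‖) ^ 2 :=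
        pow_le_pow_left₀ (norm_nonneg _) h2 2
      have h6 : τ * (τ * (‖A‖ * ‖A‖)) ≤ τ * 2 := mul_le_mul_of_nonneg_left h4.le hτ0.le
      have h7 : τ ^ 2 * ‖(ContinuousLinearMap.adjoint A) (A d)‖ ^ 2
          ≤ τ ^ 2 * (‖A‖ * ‖A d‖) ^ 2 := mul_le_mul_of_nonneg_left h5 (sq_nonneg τ)
      have h8 : (τ * (τ * (‖A‖ * ‖A‖))) * ‖A d‖ ^ 2 ≤ (τ * 2) * ‖A d‖ ^ 2 :=
        mul_le_mul_of_nonneg_right h6 (sq_nonneg _)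
      nlinarith [h7, h8]
    have := Real.sqrt_le_sqrt hsq
    rwa [Real.sqrt_sq (norm_nonneg _), Real.sqrt_sq (norm_nonneg _)] at this
  -- Descent inequality
  have hdesc : ∀ k : ℕ,
      ‖x (k + 1) - xs‖ ^ 2 + (∑ j, ‖P (G (x k) j) - P (G xs j)‖ ^ 2)
        ≤ ‖x k - xs‖ ^ 2 := by
    intro k
    have e1 : ‖x (k + 1) - xs‖ ^ 2 = ∑ j, ‖shr τ (G (x k) j) - shr τ (G xs j)‖ ^ 2 := by
      rw [PiLp.norm_sq_eq_of_L2]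
      apply Finset.sum_congr rfl
      intro j _
      congr 2
      rw [PiLp.sub_apply, hiter k j, hfix j]
      rfl
    have e2 : ‖G (x k) - G xs‖ ^ 2 = ∑ j, ‖G (x k) j - G xs j‖ ^ 2 := by
      rw [PiLp.norm_sq_eq_of_L2]
      apply Finset.sum_congr rfl
      intro j _
      rw [PiLp.sub_apply]
    have hGle : ‖G (x k) - G xs‖ ^ 2 ≤ ‖x k - xs‖ ^ 2 :=
      pow_le_pow_left₀ (norm_nonneg _) (hGne _ _) 2
    have hfj : ∀ j ∈ Finset.univ, ‖shr τ (G (x k) j) - shr τ (G xs j)‖ ^ 2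
        + ‖P (G (x k) j) - P (G xs j)‖ ^ 2 ≤ ‖G (x k) j - G xs j‖ ^ 2 := by
      intro j _
      rw [hPpj, hPpj]
      exact firm τ hτ0.le _ _
    have hsumf := Finset.sum_le_sum hfj
    rw [Finset.sum_add_distrib] at hsumf
    rw [e1]
    linarith [hsumf, hGle, e2]
  set c : ℕ → ℝ := fun k => ∑ j, ‖P (G (x k) j) - P (G xs j)‖ ^ 2 with hc
  have hcnn : ∀ k, 0 ≤ c k := fun k => Finset.sum_nonneg fun j _ => sq_nonneg _
  have hpart : ∀ n, (∑ k ∈ Finset.range n, c k) + ‖x n - xs‖ ^ 2 ≤ ‖x 0 - xs‖ ^ 2 := by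
    intro n
    induction n with
    | zero => simp
    | succ n ih =>
        rw [Finset.sum_range_succ]
        have := hdesc n
        simp only [hc] at ih ⊢
        linarith
  have hble : ∀ n, (∑ k ∈ Finset.range n, c k) ≤ ‖x 0 - xs‖ ^ 2 := by
    intro n
    have := hpart n
    nlinarith [sq_nonneg ‖x n - xs‖]
  have hsumm : Summable c := summable_of_sum_range_le hcnn hble
  refine ⟨hsumm, Summable.tsum_le_of_sum_range_le hsumm hble, ?_⟩
  intro j
  have hc0 : Tendsto c atTop (nhds 0) := hsumm.tendsto_atTop_zero
  have hsq : Tendsto (fun k => ‖P (G (x k) j) - P (G xs j)‖ ^ 2) atTop (nhds 0) := by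
    refine squeeze_zero (fun k => sq_nonneg _) (fun k => ?_) hc0
    exact Finset.single_le_sum
      (f := fun i => ‖P (G (x k) i) - P (G xs i)‖ ^ 2)
      (fun i _ => sq_nonneg _) (Finset.mem_univ j)
  have hnrm : Tendsto (fun k => ‖P (G (x k) j) - P (G xs j)‖) atTop (nhds 0) := by
    have h := (Real.continuous_sqrt.tendsto 0).comp hsq
    simp only [Function.comp_def, Real.sqrt_zero] at h
    convert h using 2 with k
    rw [Real.sqrt_sq (norm_nonneg _)]
  exact tendsto_iff_norm_sub_tendsto_zero.mpr hnrm
end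

section
/- Under Assumption (0 < τ < 2/‖A*A‖), suppose x^k ⇀ x* weakly where x* is a fixed point of S_τ = J_τ ∘ G_τ, and let j ∈ supp(x*) (so x*_j ≠ 0). Then ‖G_τ(x*)_j‖₂ > τ, and there are only finitely many k with ‖G_τ(x^k)_j‖₂ ≤ τ. -/
open Filter
open scoped RealInnerProductSpace

variable {H0 K : Type*} [NormedAddCommGroup H0] [InnerProductSpace ℝ H0] [CompleteSpace H0]
  [NormedAddCommGroup K] [InnerProductSpace ℝ K] [CompleteSpace K]

/-- If `x^k ⇀ x*` with `x*` a fixed point of `J_τ ∘ G_τ` and `j ∈ supp(x*)`, then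
`‖G_τ(x*)_j‖ > τ` and `‖G_τ(x^k)_j‖ ≤ τ` for only finitely many `k`. -/
theorem stmt_14 {N : ℕ} (A : PiLp 2 (fun _ : Fin N => H0) →L[ℝ] K) (u : K)
    (τ : ℝ) (hτ0 : 0 < τ) (hτ2 : τ * ‖(ContinuousLinearMap.adjoint A).comp A‖ < 2)
    (G : PiLp 2 (fun _ : Fin N => H0) → PiLp 2 (fun _ : Fin N => H0))
    (hG : ∀ y, G y = y - τ • (ContinuousLinearMap.adjoint A) (A y - u))
    (xs : PiLp 2 (fun _ : Fin N => H0))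
    (hfix : ∀ j : Fin N, xs j = (max (‖G xs j‖ - τ) 0 / ‖G xs j‖) • G xs j)
    (x : ℕ → PiLp 2 (fun _ : Fin N => H0))
    (hiter : ∀ (k : ℕ) (j : Fin N),
      x (k + 1) j = (max (‖G (x k) j‖ - τ) 0 / ‖G (x k) j‖) • G (x k) j)
    (hweak : ∀ y : PiLp 2 (fun _ : Fin N => H0),
      Tendsto (fun k => ⟪x k, y⟫) atTop (nhds ⟪xs, y⟫))
    (j : Fin N) (hj : xs j ≠ 0) :
    τ < ‖G xs j‖ ∧ {k : ℕ | ‖G (x k) j‖ ≤ τ}.Finite := by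
  have h1 : τ < ‖G xs j‖ := by
    by_contra h
    push_neg at h
    apply hj
    rw [hfix j, max_eq_right (by linarith)]
    simp
  refine ⟨h1, ?_⟩
  by_contra hinf
  -- for k in the set, x (k+1) j = 0
  have hzero : ∀ k, ‖G (x k) j‖ ≤ τ → x (k + 1) j = 0 := by
    intro k hk
    rw [hiter k j, max_eq_right (by linarith)]
    simp
  set y : PiLp 2 (fun _ : Fin N => H0) := WithLp.toLp 2 (fun i => if i = j then xs j else 0) with hy
  have hinner : ∀ z : PiLp 2 (fun _ : Fin N => H0), ⟪z, y⟫ = ⟪z j, xs j⟫ := by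
    intro z
    rw [PiLp.inner_apply]
    rw [Finset.sum_eq_single j]
    · simp [hy]
    · intro b _ hb; simp [hy, hb]
    · simp
  have hL : (0 : ℝ) < ⟪xs, y⟫ := by
    rw [hinner, real_inner_self_eq_norm_sq]
    exact pow_pos (norm_pos_iff.mpr hj) 2
  have hfreq : ∃ᶠ m in atTop, x m j = 0 := by
    rw [Nat.frequently_atTop_iff_infinite]
    apply Set.Infinite.mono (s := (· + 1) '' {k : ℕ | ‖G (x k) j‖ ≤ τ})
    · rintro m ⟨k, hk, rfl⟩
      exact hzero k hk
    · exact Set.Infinite.image (fun a _ b _ h => by simpa using h) hinf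
  have hev : ∀ᶠ m in atTop, 0 < ⟪x m, y⟫ :=
    (hweak y).eventually (eventually_gt_nhds hL)
  obtain ⟨m, hm0, hmpos⟩ := (hfreq.and_eventually hev).exists
  rw [hinner, hm0, inner_zero_left] at hmpos
  exact lt_irrefl 0 hmpos
end

section
/- Under Assumption (0 < τ < 2/‖A*A‖), let x^{k+1} = J_τ ∘ G_τ(x^k) with x^0 ∈ H arbitrary, and suppose x^k converges weakly to a minimizer x* of φ₁ + φ₂. Then for each j ∈ supp(x*), the angle between x^k_j and x*_j tends to 0 as k → ∞. -/
open Filter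
open scoped RealInnerProductSpace

variable {H0 K : Type*} [NormedAddCommGroup H0] [InnerProductSpace ℝ H0] [CompleteSpace H0]
  [NormedAddCommGroup K] [InnerProductSpace ℝ K] [CompleteSpace K]

lemma aux_zero (c d : ℝ) (hd : 0 ≤ d) (H : ∀ t : ℝ, 0 ≤ t*c + t^2*d) : c = 0 := by
  by_contra hc
  have h1 : (0:ℝ) < 2*d+1 := by linarith
  have h2 := H (-(c/(2*d+1)))
  have hc2 : 0 < c^2 := by positivity
  have key : -(c/(2*d+1))*c + (-(c/(2*d+1)))^2*d = c^2 * (-(d+1)) / (2*d+1)^2 := by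
    field_simp; ring
  rw [key] at h2
  have hneg : c^2 * (-(d+1)) < 0 := by nlinarith
  rcases div_nonneg_iff.mp h2 with ⟨h3, _⟩ | ⟨_, h4⟩
  · linarith
  · nlinarith [pow_pos h1 2]

lemma aux_opt {N : ℕ} (A : PiLp 2 (fun _ : Fin N => H0) →L[ℝ] K) (u : K)
    (xs : PiLp 2 (fun _ : Fin N => H0))
    (hmin : ∀ y : PiLp 2 (fun _ : Fin N => H0),
      (∑ j, ‖xs j‖) + ‖A xs - u‖ ^ 2 / 2 ≤ (∑ j, ‖y j‖) + ‖A y - u‖ ^ 2 / 2)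
    (j : Fin N) (hj : xs j ≠ 0) :
    ∀ v : H0, ⟪xs j, v⟫ + ‖xs j‖ * ⟪(ContinuousLinearMap.adjoint A) (A xs - u) j, v⟫ = 0 := by
  have hr : 0 < ‖xs j‖ := norm_pos_iff.mpr hj
  set sgl : H0 → PiLp 2 (fun _ : Fin N => H0) :=
    fun v => (WithLp.equiv 2 (∀ _ : Fin N, H0)).symm (Pi.single j v) with hsgl
  have hinner_sgl : ∀ (z : PiLp 2 (fun _ : Fin N => H0)) (v : H0), ⟪z, sgl v⟫ = ⟪z j, v⟫ := by
    intro z v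
    rw [PiLp.inner_apply, Finset.sum_eq_single j]
    · simp [hsgl]
    · intro i _ hij; simp [hsgl, Pi.single_eq_of_ne hij, hij]
    · simp
  intro v
  have key : ∀ t : ℝ, 0 ≤ t * (⟪xs j, v⟫ / ‖xs j‖ + ⟪A xs - u, A (sgl v)⟫)
      + t^2 * (‖v‖^2 / (2*‖xs j‖) + ‖A (sgl v)‖^2 / 2) := by
    intro t
    have hm := hmin (xs + t • sgl v)
    have hsum : (∑ i, ‖(xs + t • sgl v) i‖)
        = ‖xs j + t • v‖ + ∑ i ∈ Finset.univ.erase j, ‖xs i‖ := by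
      rw [← Finset.add_sum_erase Finset.univ _ (Finset.mem_univ j)]
      congr 1
      · simp [hsgl]
      · refine Finset.sum_congr rfl fun i hi => ?_
        have hij : i ≠ j := Finset.ne_of_mem_erase hi
        simp [hsgl, Pi.single_eq_of_ne hij, hij]
    have hsum0 : (∑ i, ‖xs i‖) = ‖xs j‖ + ∑ i ∈ Finset.univ.erase j, ‖xs i‖ :=
      (Finset.add_sum_erase Finset.univ _ (Finset.mem_univ j)).symm
    have hAw : A (xs + t • sgl v) - u = (A xs - u) + t • A (sgl v) := by
      rw [map_add, map_smul]; abel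
    rw [hsum, hsum0, hAw] at hm
    have hns : ‖(A xs - u) + t • A (sgl v)‖^2
        = ‖A xs - u‖^2 + 2*(t*⟪A xs - u, A (sgl v)⟫) + t^2*‖A (sgl v)‖^2 := by
      rw [norm_add_sq_real, real_inner_smul_right, norm_smul, Real.norm_eq_abs,
        mul_pow, sq_abs]
    rw [hns] at hm
    have hb : ‖xs j + t • v‖^2 = ‖xs j‖^2 + 2*(t*⟪xs j, v⟫) + t^2*‖v‖^2 := by
      rw [norm_add_sq_real, real_inner_smul_right, norm_smul, Real.norm_eq_abs,
        mul_pow, sq_abs]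
    have h2 : (0:ℝ) < 2*‖xs j‖ := by positivity
    have hbb : ‖xs j + t • v‖ - ‖xs j‖ ≤ (2*(t*⟪xs j, v⟫) + t^2*‖v‖^2) / (2*‖xs j‖) := by
      rw [le_div_iff₀ h2]
      nlinarith [sq_nonneg (‖xs j + t • v‖ - ‖xs j‖)]
    have expand : t * (⟪xs j, v⟫ / ‖xs j‖ + ⟪A xs - u, A (sgl v)⟫)
      + t^2 * (‖v‖^2 / (2*‖xs j‖) + ‖A (sgl v)‖^2 / 2)
      = (2*(t*⟪xs j, v⟫) + t^2*‖v‖^2) / (2*‖xs j‖)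
        + (t*⟪A xs - u, A (sgl v)⟫ + t^2*‖A (sgl v)‖^2/2) := by
      field_simp; ring
    rw [expand]
    linarith [hbb]
  have hd : (0:ℝ) ≤ ‖v‖^2 / (2*‖xs j‖) + ‖A (sgl v)‖^2 / 2 := by positivity
  have hc := aux_zero _ _ hd key
  have hadj : ⟪A xs - u, A (sgl v)⟫ = ⟪(ContinuousLinearMap.adjoint A) (A xs - u) j, v⟫ := by
    rw [← hinner_sgl ((ContinuousLinearMap.adjoint A) (A xs - u)) v,
      ContinuousLinearMap.adjoint_inner_left]
  rw [hadj] at hc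
  have h5 := congrArg (fun z => ‖xs j‖ * z) hc
  simp only [mul_add, mul_zero] at h5
  rw [mul_div_cancel₀ _ (ne_of_gt hr)] at h5
  linarith [h5]

/-- Angular convergence on the support: if the forward–backward iterates converge
weakly to a minimizer `x*`, then for each `j ∈ supp(x*)` the angle between
`x^k_j` and `x*_j` tends to `0`. -/
theorem stmt_15 {N : ℕ} (A : PiLp 2 (fun _ : Fin N => H0) →L[ℝ] K) (u : K)
    (τ : ℝ) (hτ0 : 0 < τ) (hτ2 : τ * ‖(ContinuousLinearMap.adjoint A).comp A‖ < 2)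
    (G : PiLp 2 (fun _ : Fin N => H0) → PiLp 2 (fun _ : Fin N => H0))
    (hG : ∀ y, G y = y - τ • (ContinuousLinearMap.adjoint A) (A y - u))
    (xs : PiLp 2 (fun _ : Fin N => H0))
    (hmin : ∀ y : PiLp 2 (fun _ : Fin N => H0),
      (∑ j, ‖xs j‖) + ‖A xs - u‖ ^ 2 / 2 ≤ (∑ j, ‖y j‖) + ‖A y - u‖ ^ 2 / 2)
    (x : ℕ → PiLp 2 (fun _ : Fin N => H0))
    (hiter : ∀ (k : ℕ) (j : Fin N),
      x (k + 1) j = (max (‖G (x k) j‖ - τ) 0 / ‖G (x k) j‖) • G (x k) j)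
    (hweak : ∀ y : PiLp 2 (fun _ : Fin N => H0),
      Tendsto (fun k => ⟪x k, y⟫) atTop (nhds ⟪xs, y⟫)) :
    ∀ j : Fin N, xs j ≠ 0 →
      Tendsto (fun k => InnerProductGeometry.angle (x k j) (xs j)) atTop (nhds 0) := by
  intro j hj
  have hr : 0 < ‖xs j‖ := norm_pos_iff.mpr hj
  set r := ‖xs j‖ with hrdef
  set sgl : H0 → PiLp 2 (fun _ : Fin N => H0) :=
    fun v => (WithLp.equiv 2 (∀ _ : Fin N, H0)).symm (Pi.single j v) with hsgl
  have hinner_sgl : ∀ (z : PiLp 2 (fun _ : Fin N => H0)) (v : H0), ⟪z, sgl v⟫ = ⟪z j, v⟫ := by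
    intro z v
    rw [PiLp.inner_apply, Finset.sum_eq_single j]
    · simp [hsgl]
    · intro i _ hij; simp [hsgl, Pi.single_eq_of_ne hij, hij]
    · simp
  -- the fixed-point identity at xs
  have hq : (ContinuousLinearMap.adjoint A) (A xs - u) j = (-(r⁻¹)) • xs j := by
    have h0 : ∀ v : H0, ⟪xs j + r • ((ContinuousLinearMap.adjoint A) (A xs - u) j), v⟫ = 0 := by
      intro v
      rw [inner_add_left, real_inner_smul_left]
      exact aux_opt A u xs hmin j hj v
    have h1 : xs j + r • ((ContinuousLinearMap.adjoint A) (A xs - u) j) = 0 := by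
      have := h0 (xs j + r • ((ContinuousLinearMap.adjoint A) (A xs - u) j))
      rwa [real_inner_self_eq_norm_sq, pow_eq_zero_iff (by norm_num), norm_eq_zero] at this
    have h2 : r • ((ContinuousLinearMap.adjoint A) (A xs - u) j) = -(xs j) := by
      linear_combination (norm := abel) h1
    calc (ContinuousLinearMap.adjoint A) (A xs - u) j
        = r⁻¹ • (r • ((ContinuousLinearMap.adjoint A) (A xs - u) j)) := by
          rw [smul_smul, inv_mul_cancel₀ (ne_of_gt hr), one_smul]
      _ = (-(r⁻¹)) • xs j := by rw [h2, smul_neg, neg_smul]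
  have hGxs : G xs j = (1 + τ/r) • xs j := by
    rw [hG]
    have : (xs - τ • (ContinuousLinearMap.adjoint A) (A xs - u)) j
        = xs j - τ • ((ContinuousLinearMap.adjoint A) (A xs - u) j) := rfl
    rw [this, hq, smul_smul]
    rw [sub_eq_iff_eq_add]
    rw [← add_smul]
    rw [show (1 + τ / r + τ * -r⁻¹ : ℝ) = 1 by ring, one_smul]
  have hGinner : ⟪G xs j, xs j⟫ = (r + τ) * r := by
    rw [hGxs, real_inner_smul_left, real_inner_self_eq_norm_sq, ← hrdef]
    field_simp
  -- limit of inner products with the iterates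
  have hL : Tendsto (fun k => ⟪x k j, xs j⟫) atTop (nhds (r^2)) := by
    have h := hweak (sgl (xs j))
    simp only [hinner_sgl] at h
    rwa [real_inner_self_eq_norm_sq, ← hrdef] at h
  have hL' : Tendsto (fun k => ⟪x (k+1) j, xs j⟫) atTop (nhds (r^2)) :=
    hL.comp (tendsto_add_atTop_nat 1)
  have hN : Tendsto (fun k => ⟪G (x k) j, xs j⟫) atTop (nhds ((r + τ) * r)) := by
    set y' : PiLp 2 (fun _ : Fin N => H0) :=
      sgl (xs j) - τ • (ContinuousLinearMap.adjoint A) (A (sgl (xs j))) with hy'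
    have hform : ∀ y : PiLp 2 (fun _ : Fin N => H0),
        ⟪G y j, xs j⟫ = ⟪y, y'⟫ + τ * ⟪u, A (sgl (xs j))⟫ := by
      intro y
      rw [← hinner_sgl (G y) (xs j), hG, inner_sub_left, real_inner_smul_left,
        ContinuousLinearMap.adjoint_inner_left, inner_sub_left, hy',
        inner_sub_right, real_inner_smul_right, ContinuousLinearMap.adjoint_inner_right]
      ring
    have h := (hweak y').add (tendsto_const_nhds (x := τ * ⟪u, A (sgl (xs j))⟫))
    have h2 : Tendsto (fun k => ⟪G (x k) j, xs j⟫) atTop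
        (nhds (⟪xs, y'⟫ + τ * ⟪u, A (sgl (xs j))⟫)) := by
      refine h.congr fun k => (hform (x k)).symm
    rwa [← hform xs, hGinner] at h2
  have hNpos : ∀ᶠ k in atTop, 0 < ⟪G (x k) j, xs j⟫ :=
    hN.eventually (eventually_gt_nhds (by positivity))
  -- ‖x (k+1) j‖ in terms of ‖G (x k) j‖
  have hnorm : ∀ k, ‖x (k+1) j‖ = max (‖G (x k) j‖ - τ) 0 := by
    intro k
    rw [hiter, norm_smul, Real.norm_eq_abs,
      abs_of_nonneg (div_nonneg (le_max_right _ _) (norm_nonneg _))]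
    rcases eq_or_ne (‖G (x k) j‖) 0 with h|h
    · rw [h, div_zero, zero_mul]
      symm; rw [max_eq_right]; linarith
    · rw [div_mul_cancel₀ _ h]
  have hP : ∀ k, ⟪x (k+1) j, xs j⟫
      = (max (‖G (x k) j‖ - τ) 0 / ‖G (x k) j‖) * ⟪G (x k) j, xs j⟫ := by
    intro k; rw [hiter, real_inner_smul_left]
  -- the thresholding ratio converges to r/(r+τ)
  have hρ : Tendsto (fun k => max (‖G (x k) j‖ - τ) 0 / ‖G (x k) j‖) atTop
      (nhds (r / (r + τ))) := by
    have hdiv := hL'.div hN (by positivity)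
    have heq : r^2 / ((r+τ)*r) = r / (r+τ) := by
      field_simp
    rw [heq] at hdiv
    refine Tendsto.congr' ?_ hdiv
    filter_upwards [hNpos] with k hk
    simp only [Pi.div_apply]
    rw [hP k, mul_div_cancel_right₀ _ (ne_of_gt hk)]
  have hρpos : (0:ℝ) < r / (r+τ) := by positivity
  have hev : ∀ᶠ k in atTop, τ < ‖G (x k) j‖ := by
    filter_upwards [hρ.eventually (eventually_gt_nhds hρpos)] with k hk
    rcases div_pos_iff.mp hk with ⟨h1, h2⟩ | ⟨_, h2⟩
    · rcases lt_max_iff.mp h1 with h | h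
      · linarith
      · exact absurd h (lt_irrefl 0)
    · linarith [norm_nonneg (G (x k) j)]
  -- ‖G (x k) j‖ → r + τ
  have hτa : Tendsto (fun k => τ / ‖G (x k) j‖) atTop (nhds (τ/(r+τ))) := by
    have h1 : Tendsto (fun k => 1 - max (‖G (x k) j‖ - τ) 0 / ‖G (x k) j‖) atTop
        (nhds (1 - r/(r+τ))) := (tendsto_const_nhds (x := (1:ℝ))).sub hρ
    have heq : 1 - r/(r+τ) = τ/(r+τ) := by
      rw [eq_div_iff (by positivity), sub_mul, div_mul_cancel₀ _ (by positivity)]; ring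
    rw [heq] at h1
    refine Tendsto.congr' ?_ h1
    filter_upwards [hev] with k hk
    have ha0 : (0:ℝ) < ‖G (x k) j‖ := lt_trans hτ0 hk
    rw [max_eq_left (by linarith)]
    field_simp
    ring
  have ha : Tendsto (fun k => ‖G (x k) j‖) atTop (nhds (r+τ)) := by
    have h1 : Tendsto (fun k => τ / (τ / ‖G (x k) j‖)) atTop (nhds (τ/(τ/(r+τ)))) :=
      tendsto_const_nhds.div hτa (by positivity)
    have heq : τ/(τ/(r+τ)) = r+τ := by
      field_simp
    rw [heq] at h1
    refine Tendsto.congr' ?_ h1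
    filter_upwards [hev] with k hk
    have ha0 : (0:ℝ) < ‖G (x k) j‖ := lt_trans hτ0 hk
    rw [div_div_eq_mul_div, mul_div_assoc]
    field_simp
  have hn : Tendsto (fun k => ‖x (k+1) j‖) atTop (nhds r) := by
    have h1 : Tendsto (fun k => ‖G (x k) j‖ - τ) atTop (nhds (r + τ - τ)) :=
      ha.sub tendsto_const_nhds
    rw [add_sub_cancel_right] at h1
    refine Tendsto.congr' ?_ h1
    filter_upwards [hev] with k hk
    rw [hnorm k, max_eq_left (by linarith)]
  -- cosine tends to 1, so the angle tends to 0
  have hcos : Tendsto (fun k => ⟪x (k+1) j, xs j⟫ / (‖x (k+1) j‖ * ‖xs j‖)) atTop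
      (nhds 1) := by
    have h1 := hL'.div (hn.mul (tendsto_const_nhds (x := ‖xs j‖))) (by positivity)
    have heq : r^2 / (r * ‖xs j‖) = 1 := by
      rw [← hrdef]; field_simp
    rwa [heq] at h1
  have hang : Tendsto (fun k => InnerProductGeometry.angle (x (k+1) j) (xs j)) atTop
      (nhds 0) := by
    have harc := (Real.continuous_arccos.tendsto 1).comp hcos
    rw [Real.arccos_one] at harc
    exact harc
  exact (tendsto_add_atTop_iff_nat 1).mp hang
end

section
/- Under Assumption (0 < τ < 2/‖A*A‖), suppose x^k ⇀ x* weakly where x* is a fixed point of J_τ ∘ G_τ, and j ∈ [N] satisfies x*_j = 0 and ‖∇φ₂(x*)_j‖₂ = 1. Then ‖G_τ(x*)_j‖₂ = τ, P_τ(G_τ(x^k)_j) → G_τ(x*)_j strongly implies that the rows converge strongly: x^k_j → 0 in ℓ²(Ω). -/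
open Filter
open scoped RealInnerProductSpace

variable {H0 K : Type*} [NormedAddCommGroup H0] [InnerProductSpace ℝ H0] [CompleteSpace H0]
  [NormedAddCommGroup K] [InnerProductSpace ℝ K] [CompleteSpace K]

/-- On `E \ supp(x*)`: if `x^k ⇀ x*` where `x*` is a fixed point of `J_τ ∘ G_τ`,
`x*_j = 0` and `‖∇φ₂(x*)_j‖ = 1`, then `‖G_τ(x*)_j‖ = τ`, and strong convergence
`P_τ(G_τ(x^k)_j) → G_τ(x*)_j` forces `x^k_j → 0` strongly. -/
theorem stmt_16 {N : ℕ} (A : PiLp 2 (fun _ : Fin N => H0) →L[ℝ] K) (u : K)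
    (τ : ℝ) (hτ0 : 0 < τ) (hτ2 : τ * ‖(ContinuousLinearMap.adjoint A).comp A‖ < 2)
    (G : PiLp 2 (fun _ : Fin N => H0) → PiLp 2 (fun _ : Fin N => H0))
    (hG : ∀ y, G y = y - τ • (ContinuousLinearMap.adjoint A) (A y - u))
    (P : H0 → H0)
    (hP : ∀ z : H0, P z = if ‖z‖ ≤ τ then z else (τ / ‖z‖) • z)
    (xs : PiLp 2 (fun _ : Fin N => H0))
    (hfix : ∀ j : Fin N, xs j = (max (‖G xs j‖ - τ) 0 / ‖G xs j‖) • G xs j)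
    (x : ℕ → PiLp 2 (fun _ : Fin N => H0))
    (hiter : ∀ (k : ℕ) (j : Fin N),
      x (k + 1) j = (max (‖G (x k) j‖ - τ) 0 / ‖G (x k) j‖) • G (x k) j)
    (hweak : ∀ y : PiLp 2 (fun _ : Fin N => H0),
      Tendsto (fun k => ⟪x k, y⟫) atTop (nhds ⟪xs, y⟫))
    (j : Fin N) (hj0 : xs j = 0)
    (hj1 : ‖(ContinuousLinearMap.adjoint A) (A xs - u) j‖ = 1) :
    ‖G xs j‖ = τ ∧
      (Tendsto (fun k => P (G (x k) j)) atTop (nhds (G xs j)) →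
        Tendsto (fun k => x k j) atTop (nhds (0 : H0))) := by
  classical
  -- Compute G xs j
  have hGxsj : G xs j = -(τ • ((ContinuousLinearMap.adjoint A) (A xs - u) j)) := by
    have := hG xs
    have h1 : G xs j = xs j - (τ • (ContinuousLinearMap.adjoint A) (A xs - u)) j := by
      rw [this]; rfl
    rw [h1, hj0]
    simp [PiLp.smul_apply]
  have hnorm : ‖G xs j‖ = τ := by
    rw [hGxsj, norm_neg, norm_smul, hj1, Real.norm_of_nonneg hτ0.le, mul_one]
  refine ⟨hnorm, ?_⟩
  intro hstrong
  -- weak convergence of coordinate j to 0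
  have hweakj : ∀ w : H0, Tendsto (fun k => ⟪x k j, w⟫) atTop (nhds 0) := by
    intro w
    have hy := hweak (WithLp.toLp 2 (Pi.single j w))
    have hx : ∀ z : PiLp 2 (fun _ : Fin N => H0), ⟪z, WithLp.toLp 2 (Pi.single j w : ∀ _ : Fin N, H0)⟫ = ⟪z j, w⟫ := by
      intro z
      rw [PiLp.inner_apply]
      rw [Finset.sum_eq_single j]
      · simp
      · intro i _ hij
        simp [Pi.single_eq_of_ne hij]
      · simp
    simp only [hx] at hy
    rw [hj0] at hy
    simpa using hy
  -- key identity
  have key : ∀ k : ℕ, τ * ‖x (k + 1) j‖ = ⟪x (k + 1) j, P (G (x k) j)⟫ := by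
    intro k
    set z := G (x k) j with hz
    by_cases h1 : ‖z‖ ≤ τ
    · have : max (‖z‖ - τ) 0 = 0 := max_eq_right (by linarith)
      have hx0 : x (k + 1) j = 0 := by rw [hiter k j, ← hz, this, zero_div, zero_smul]
      rw [hx0]
      simp
    · push_neg at h1
      have hzpos : (0:ℝ) < ‖z‖ := lt_trans hτ0 h1
      have hmax : max (‖z‖ - τ) 0 = ‖z‖ - τ := max_eq_left (by linarith)
      have hxk : x (k + 1) j = ((‖z‖ - τ) / ‖z‖) • z := by rw [hiter k j, ← hz, hmax]
      have hPz : P z = (τ / ‖z‖) • z := by rw [hP z, if_neg (not_le.mpr h1)]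
      rw [hxk, hPz]
      rw [real_inner_smul_left, real_inner_smul_right, real_inner_self_eq_norm_sq]
      rw [norm_smul, Real.norm_of_nonneg (div_nonneg (by linarith) hzpos.le)]
      field_simp
  -- d k → 0
  have hd : Tendsto (fun k => ‖P (G (x k) j) - G xs j‖) atTop (nhds 0) :=
    tendsto_iff_norm_sub_tendsto_zero.mp hstrong
  -- b k → 0
  have hb : Tendsto (fun k => ⟪x (k + 1) j, G xs j⟫) atTop (nhds 0) :=
    (hweakj (G xs j)).comp (tendsto_add_atTop_nat 1)
  -- eventual bound
  have hev : ∀ᶠ k in atTop, ‖P (G (x k) j) - G xs j‖ ≤ τ / 2 := by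
    have := hd.eventually (eventually_le_nhds (by linarith : (0:ℝ) < τ / 2))
    exact this
  have hineq : ∀ k : ℕ, ‖P (G (x k) j) - G xs j‖ ≤ τ / 2 →
      ‖x (k + 1) j‖ ≤ (2 / τ) * ⟪x (k + 1) j, G xs j⟫ := by
    intro k hk
    have hcs : ⟪x (k + 1) j, P (G (x k) j) - G xs j⟫ ≤ ‖x (k + 1) j‖ * ‖P (G (x k) j) - G xs j‖ :=
      real_inner_le_norm _ _
    have hsplit : ⟪x (k + 1) j, P (G (x k) j)⟫ =
        ⟪x (k + 1) j, P (G (x k) j) - G xs j⟫ + ⟪x (k + 1) j, G xs j⟫ := by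
      rw [← inner_add_right, sub_add_cancel]
    have hk2 := key k
    have hnn : (0:ℝ) ≤ ‖x (k + 1) j‖ := norm_nonneg _
    have h3 : (τ / 2) * ‖x (k + 1) j‖ ≤ ⟪x (k + 1) j, G xs j⟫ := by
      nlinarith [mul_le_mul_of_nonneg_left hk hnn]
    have h4 : ‖x (k + 1) j‖ = (2 / τ) * ((τ / 2) * ‖x (k + 1) j‖) := by
      field_simp
    rw [h4]
    exact mul_le_mul_of_nonneg_left h3 (by positivity)
  -- squeeze
  have hnormz : Tendsto (fun k => ‖x (k + 1) j‖) atTop (nhds 0) := by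
    apply squeeze_zero' (Eventually.of_forall fun k => norm_nonneg _)
      (hev.mono fun k hk => hineq k hk)
    have : (2 / τ) * (0:ℝ) = 0 := by ring
    simpa [this] using hb.const_mul (2 / τ)
  have h2 : Tendsto (fun k => x (k + 1) j) atTop (nhds (0 : H0)) :=
    tendsto_zero_iff_norm_tendsto_zero.mpr hnormz
  exact (tendsto_add_atTop_iff_nat 1).mp h2
end
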